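/- Let H be a complex Hilbert space, G a selfadjoint continuous linear operator on H, and K : ℝ → (H →L[ℂ] H) a family of continuous linear operators with K(t) selfadjoint for each t, having derivative K'(x) (in operator norm) at a point x. Suppose βₙ : ℝ → ℝ and φₙ : ℝ → H are differentiable at x with K(t)(φₙ(t)) = βₙ(t) • G(φₙ(t)) for all t near x, and suppose βⱼ ∈ ℝ, φⱼ ∈ H satisfy K(x) φⱼ = βⱼ • (G φⱼ) with βⱼ ≠ βₙ(x). Then (βₙ(x) − βⱼ) · ⟪φⱼ, G(φₙ'(x))⟫ = ⟪φⱼ, K'(x)(φₙ(x))⟫. -/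

import Mathlib

open scoped ComplexInnerProductSpace

/-- The identity `(βₙ − βⱼ)·(φⱼ, G φₙ') = (φⱼ, K' φₙ)` relating the conversion
coefficient to the matrix element of `K'` for distinct real eigenvalue branches
of the pencil `K(x) φ = β G φ`. -/
theorem conversion_coefficient_formula
    {H : Type*} [NormedAddCommGroup H] [InnerProductSpace ℂ H] [CompleteSpace H]
    (G : H →L[ℂ] H) (hG : ∀ f g : H, ⟪G f, g⟫ = ⟪f, G g⟫)
    (K : ℝ → (H →L[ℂ] H)) (hKsa : ∀ t : ℝ, ∀ f g : H, ⟪K t f, g⟫ = ⟪f, K t g⟫)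
    (x : ℝ) (K' : H →L[ℂ] H) (hK : HasDerivAt K K' x)
    (βn : ℝ → ℝ) (βn'x : ℝ) (hβn : HasDerivAt βn βn'x x)
    (φn : ℝ → H) (φn'x : H) (hφn : HasDerivAt φn φn'x x)
    (heqn : ∀ᶠ t in nhds x, K t (φn t) = ((βn t : ℂ)) • G (φn t))
    (βj : ℝ) (φj : H) (heqj : K x φj = ((βj : ℂ)) • (G φj))
    (hne : βj ≠ βn x) :
    ((βn x : ℂ) - (βj : ℂ)) * ⟪φj, G φn'x⟫ = ⟪φj, K' (φn x)⟫ := by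
  -- selfadjoint trick: ⟪φj, K x v⟫ = βj * ⟪φj, G v⟫
  have hKj : ∀ v : H, ⟪φj, K x v⟫ = (βj : ℂ) * ⟪φj, G v⟫ := by
    intro v
    rw [← hKsa x φj v, heqj, inner_smul_left, Complex.conj_ofReal, ← hG]
  -- orthogonality ⟪φj, G (φn x)⟫ = 0
  have hxmem := heqn.self_of_nhds
  have horth : ⟪φj, G (φn x)⟫ = 0 := by
    have h1 : ⟪φj, K x (φn x)⟫ = (βn x : ℂ) * ⟪φj, G (φn x)⟫ := by
      rw [hxmem, inner_smul_right]
    have h2 := hKj (φn x)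
    have h3 : ((βn x : ℂ) - (βj : ℂ)) * ⟪φj, G (φn x)⟫ = 0 := by
      rw [sub_mul, ← h1, ← h2, sub_self]
    have hne' : ((βn x : ℂ) - (βj : ℂ)) ≠ 0 := by
      intro h
      apply hne
      have := sub_eq_zero.mp h
      exact_mod_cast this.symm
    exact (mul_eq_zero.mp h3).resolve_left hne'
  -- derivatives
  have hKr : HasDerivAt (fun t => (K t).restrictScalars ℝ) (K'.restrictScalars ℝ) x :=
    (ContinuousLinearMap.restrictScalarsL ℂ H H ℝ ℝ).hasFDerivAt.comp_hasDerivAt x hK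
  have hlhs : HasDerivAt (fun t => K t (φn t)) (K' (φn x) + K x φn'x) x := by
    have := hKr.clm_apply hφn
    simpa using this
  have hβnC : HasDerivAt (fun t => ((βn t : ℂ))) (βn'x : ℂ) x := hβn.ofReal_comp
  have hGφn : HasDerivAt (fun t => G (φn t)) (G φn'x) x :=
    (G.restrictScalars ℝ).hasFDerivAt.comp_hasDerivAt x hφn
  have hrhs : HasDerivAt (fun t => ((βn t : ℂ)) • G (φn t))
      ((βn'x : ℂ) • G (φn x) + (βn x : ℂ) • G φn'x) x := by
    have h := hβnC.smul hGφn
    rw [add_comm] at h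
    exact h
  have hlhs' : HasDerivAt (fun t => ((βn t : ℂ)) • G (φn t)) (K' (φn x) + K x φn'x) x :=
    hlhs.congr_of_eventuallyEq (heqn.mono fun t ht => ht.symm)
  have hde : K' (φn x) + K x φn'x = (βn'x : ℂ) • G (φn x) + (βn x : ℂ) • G φn'x :=
    hlhs'.unique hrhs
  -- take inner products
  have hfin : ⟪φj, K' (φn x)⟫ + ⟪φj, K x φn'x⟫
      = (βn'x : ℂ) * ⟪φj, G (φn x)⟫ + (βn x : ℂ) * ⟪φj, G φn'x⟫ := by
    have := congrArg (fun v => ⟪φj, v⟫) hde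
    simpa only [inner_add_right, inner_smul_right] using this
  rw [hKj φn'x, horth] at hfin
  linear_combination -hfin
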